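/- arXiv:2408.01027 — 5 statements merged into one kernel-verified Lean document; each statement's English description precedes it below -/
import Mathlib

section
/- In the RandMixed mechanism for two agents, correcting a single item's report towards the truth never decreases expected utility: fix agent i with true valuation v_i, an item e_k, and reports (v̂^k_i, v̂_{3-i}) with v̂^k_i(e_k) ≠ v_i(e_k); define v̂_i by v̂_i(e_k) = v_i(e_k) and v̂_i(e) = v̂^k_i(e) for all e ≠ e_k. Then agent i's expected true utility under RandMixed(v̂_i, v̂_{3-i}) is at least his expected true utility under RandMixed(v̂^k_i, v̂_{3-i}). -/
open Finset

attribute [local instance] Classical.propDecidable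

noncomputable section

/-- The bundle of agent `i` under deterministic allocation `A`. -/
def bundle {m n : ℕ} (A : Fin m → Fin n) (i : Fin n) : Finset (Fin m) :=
  Finset.univ.filter fun j => A j = i

/-- Additive value of a bundle. -/
def sval {m : ℕ} (f : Fin m → ℝ) (S : Finset (Fin m)) : ℝ := ∑ j ∈ S, f j

/-- Items on which both agents report value zero. -/
def mxQ0 {m : ℕ} (r : Fin 2 → Fin m → ℝ) : Finset (Fin m) :=
  Finset.univ.filter fun q => r 0 q = 0 ∧ r 1 q = 0

/-- Items on which agent 1 reports strictly more than agent 2. -/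
def mxQ1 {m : ℕ} (r : Fin 2 → Fin m → ℝ) : Finset (Fin m) :=
  Finset.univ.filter fun q => r 0 q > r 1 q

/-- Items on which agent 1 reports strictly less than agent 2. -/
def mxQ2 {m : ℕ} (r : Fin 2 → Fin m → ℝ) : Finset (Fin m) :=
  Finset.univ.filter fun q => r 0 q < r 1 q

/-- Items on which the two agents report the same nonzero value. -/
def mxQ3 {m : ℕ} (r : Fin 2 → Fin m → ℝ) : Finset (Fin m) :=
  Finset.univ.filter fun q => r 0 q = r 1 q ∧ r 0 q ≠ 0

/-- The position of item `q ∈ Q₃` in the list of the items of `Q₃` sorted in nonincreasing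
order of their (common reported) inherent value, ties broken by smallest index. -/
def mxRank {m : ℕ} (r : Fin 2 → Fin m → ℝ) (q : Fin m) : ℕ :=
  ((mxQ3 r).filter fun q' => r 0 q' > r 0 q ∨ (r 0 q' = r 0 q ∧ q' < q)).card

/-- The probability that mechanism `RandMixed`, on reported profile `r`, outputs the
deterministic allocation `A`: each item of `Q₀` goes independently to a uniformly random
agent, the items of `Q₁` (resp. `Q₂`) go to agent 1 (resp. agent 2), and the items of `Q₃`
are allocated round-robin in nonincreasing inherent value according to a uniformly random
permutation of the two agents. -/
def randMixedProb {m : ℕ} (r : Fin 2 → Fin m → ℝ) (A : Fin m → Fin 2) : ℝ :=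
  ((1 : ℝ) / 2) ^ (mxQ0 r).card *
    ((∑ σ : Equiv.Perm (Fin 2),
        if (∀ q ∈ mxQ1 r, A q = 0) ∧ (∀ q ∈ mxQ2 r, A q = 1) ∧
           (∀ q ∈ mxQ3 r, A q = σ ⟨mxRank r q % 2, Nat.mod_lt _ two_pos⟩)
        then (1 : ℝ) else 0)
      / (Fintype.card (Equiv.Perm (Fin 2)) : ℝ))

/-- The expected utility, under `RandMixed` on reported profile `r`, of agent `i` whose true
additive valuation is `vi`. -/
def randMixedExp {m : ℕ} (r : Fin 2 → Fin m → ℝ) (vi : Fin m → ℝ) (i : Fin 2) : ℝ :=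
  ∑ A : Fin m → Fin 2, randMixedProb r A * sval vi (bundle A i)

-- ===================== auxiliary development =====================

section RandMixedAux

variable {m : ℕ}

/-- The per-item factor of the product distribution for a fixed permutation `σ`. -/
def mxH (r : Fin 2 → Fin m → ℝ) (σ : Equiv.Perm (Fin 2)) (q' : Fin m) (j : Fin 2) : ℝ :=
  if q' ∈ mxQ0 r then 1/2
  else if q' ∈ mxQ1 r then (if j = 0 then 1 else 0)
  else if q' ∈ mxQ2 r then (if j = 1 then 1 else 0)
  else (if j = σ ⟨mxRank r q' % 2, Nat.mod_lt _ two_pos⟩ then 1 else 0)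

lemma mem_mxQ0 {r : Fin 2 → Fin m → ℝ} {q : Fin m} :
    q ∈ mxQ0 r ↔ r 0 q = 0 ∧ r 1 q = 0 := by simp [mxQ0]

lemma mem_mxQ1 {r : Fin 2 → Fin m → ℝ} {q : Fin m} :
    q ∈ mxQ1 r ↔ r 1 q < r 0 q := by simp [mxQ1]

lemma mem_mxQ2 {r : Fin 2 → Fin m → ℝ} {q : Fin m} :
    q ∈ mxQ2 r ↔ r 0 q < r 1 q := by simp [mxQ2]

lemma mem_mxQ3 {r : Fin 2 → Fin m → ℝ} {q : Fin m} :
    q ∈ mxQ3 r ↔ r 0 q = r 1 q ∧ r 0 q ≠ 0 := by simp [mxQ3]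

lemma mxQ3_of_not {r : Fin 2 → Fin m → ℝ} {q : Fin m}
    (h0 : q ∉ mxQ0 r) (h1 : q ∉ mxQ1 r) (h2 : q ∉ mxQ2 r) : q ∈ mxQ3 r := by
  rw [mem_mxQ0] at h0; rw [mem_mxQ1] at h1; rw [mem_mxQ2] at h2
  rw [mem_mxQ3]
  have heq : r 0 q = r 1 q := le_antisymm (not_lt.1 h1) (not_lt.1 h2)
  exact ⟨heq, fun hz => h0 ⟨hz, by rw [← heq]; exact hz⟩⟩

lemma mxQ1_not_Q0 {r : Fin 2 → Fin m → ℝ} {q : Fin m} (h : q ∈ mxQ1 r) : q ∉ mxQ0 r := by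
  rw [mem_mxQ1] at h; rw [mem_mxQ0]; rintro ⟨h0, h1⟩; rw [h0, h1] at h; exact lt_irrefl _ h

lemma mxQ2_not_Q0 {r : Fin 2 → Fin m → ℝ} {q : Fin m} (h : q ∈ mxQ2 r) : q ∉ mxQ0 r := by
  rw [mem_mxQ2] at h; rw [mem_mxQ0]; rintro ⟨h0, h1⟩; rw [h0, h1] at h; exact lt_irrefl _ h

lemma mxQ2_not_Q1 {r : Fin 2 → Fin m → ℝ} {q : Fin m} (h : q ∈ mxQ2 r) : q ∉ mxQ1 r := by
  rw [mem_mxQ2] at h; rw [mem_mxQ1]; exact not_lt.2 h.le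

lemma mxQ3_not_Q0 {r : Fin 2 → Fin m → ℝ} {q : Fin m} (h : q ∈ mxQ3 r) : q ∉ mxQ0 r := by
  rw [mem_mxQ3] at h; rw [mem_mxQ0]; rintro ⟨h0, _⟩; exact h.2 h0

lemma mxQ3_not_Q1 {r : Fin 2 → Fin m → ℝ} {q : Fin m} (h : q ∈ mxQ3 r) : q ∉ mxQ1 r := by
  rw [mem_mxQ3] at h; rw [mem_mxQ1, h.1]; exact lt_irrefl _

lemma mxQ3_not_Q2 {r : Fin 2 → Fin m → ℝ} {q : Fin m} (h : q ∈ mxQ3 r) : q ∉ mxQ2 r := by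
  rw [mem_mxQ3] at h; rw [mem_mxQ2, h.1]; exact lt_irrefl _

lemma fin2_helper : ∀ a b c : Fin 2, a ≠ c → b ≠ c → a = b := by decide

lemma fin2_zero_or_one : ∀ a : Fin 2, a = 0 ∨ a = 1 := by decide

lemma perm2_ext (σ τ : Equiv.Perm (Fin 2)) (x : Fin 2) (h : σ x = τ x) : σ = τ := by
  apply Equiv.ext; intro y
  by_cases hy : y = x
  · simpa [hy] using h
  · have h1 : σ y ≠ τ x := by rw [← h]; exact fun hc => hy (σ.injective hc)
    have h2 : τ y ≠ τ x := fun hc => hy (τ.injective hc)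
    exact fin2_helper _ _ _ h1 h2

lemma sum_perm2_ind (t i : Fin 2) :
    (∑ σ : Equiv.Perm (Fin 2), (if i = σ t then (1:ℝ) else 0)) = 1 := by
  rw [Finset.sum_eq_single (Equiv.swap t i)]
  · simp [Equiv.swap_apply_left]
  · intro σ _ hne
    rw [if_neg]
    intro h
    exact hne (perm2_ext σ (Equiv.swap t i) t (by rw [Equiv.swap_apply_left, ← h]))
  · simp

lemma fin2_ind_add (t : Fin 2) :
    (if (0 : Fin 2) = t then (1:ℝ) else 0) + (if (1 : Fin 2) = t then (1:ℝ) else 0) = 1 := by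
  rcases fin2_zero_or_one t with h | h <;> subst h <;> simp

lemma mxH_add (r : Fin 2 → Fin m → ℝ) (σ : Equiv.Perm (Fin 2)) (q' : Fin m) :
    mxH r σ q' 0 + mxH r σ q' 1 = 1 := by
  unfold mxH
  by_cases h0 : q' ∈ mxQ0 r
  · rw [if_pos h0, if_pos h0]; norm_num
  rw [if_neg h0, if_neg h0]
  by_cases h1 : q' ∈ mxQ1 r
  · rw [if_pos h1, if_pos h1]; simp
  rw [if_neg h1, if_neg h1]
  by_cases h2 : q' ∈ mxQ2 r
  · rw [if_pos h2, if_pos h2]; simp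
  rw [if_neg h2, if_neg h2]
  exact fin2_ind_add _

/-- Key counting identity for a fixed permutation `σ`. -/
lemma sum_ind_eq (r : Fin 2 → Fin m → ℝ) (q : Fin m) (i : Fin 2) (σ : Equiv.Perm (Fin 2)) :
    (∑ A : Fin m → Fin 2,
      ((1:ℝ)/2) ^ (mxQ0 r).card *
        (if (∀ q' ∈ mxQ1 r, A q' = 0) ∧ (∀ q' ∈ mxQ2 r, A q' = 1) ∧
            (∀ q' ∈ mxQ3 r, A q' = σ ⟨mxRank r q' % 2, Nat.mod_lt _ two_pos⟩)
          then (1:ℝ) else 0) *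
        (if A q = i then (1:ℝ) else 0)) = mxH r σ q i := by
  have key : ∀ A : Fin m → Fin 2,
      ((1:ℝ)/2) ^ (mxQ0 r).card *
        (if (∀ q' ∈ mxQ1 r, A q' = 0) ∧ (∀ q' ∈ mxQ2 r, A q' = 1) ∧
            (∀ q' ∈ mxQ3 r, A q' = σ ⟨mxRank r q' % 2, Nat.mod_lt _ two_pos⟩)
          then (1:ℝ) else 0) *
        (if A q = i then (1:ℝ) else 0) =
      ∏ q', (mxH r σ q' (A q') * (if q' = q then (if A q' = i then (1:ℝ) else 0) else 1)) := by
    intro A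
    rw [Finset.prod_mul_distrib,
      Fintype.prod_ite_eq' q (fun q' => if A q' = i then (1:ℝ) else 0)]
    congr 1
    by_cases hC : (∀ q' ∈ mxQ1 r, A q' = 0) ∧ (∀ q' ∈ mxQ2 r, A q' = 1) ∧
        (∀ q' ∈ mxQ3 r, A q' = σ ⟨mxRank r q' % 2, Nat.mod_lt _ two_pos⟩)
    · rw [if_pos hC, mul_one]
      rw [← Finset.prod_mul_prod_compl (mxQ0 r) (fun q' => mxH r σ q' (A q'))]
      have h1 : (∏ q' ∈ mxQ0 r, mxH r σ q' (A q')) = ((1:ℝ)/2) ^ (mxQ0 r).card := by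
        rw [Finset.prod_congr rfl (fun q' hq' => ?_), Finset.prod_const]
        unfold mxH; rw [if_pos hq']
      have h2 : (∏ q' ∈ (mxQ0 r)ᶜ, mxH r σ q' (A q')) = 1 := by
        apply Finset.prod_eq_one
        intro q' hq'
        have hq0 : q' ∉ mxQ0 r := Finset.mem_compl.1 hq'
        unfold mxH
        rw [if_neg hq0]
        by_cases hq1 : q' ∈ mxQ1 r
        · rw [if_pos hq1, if_pos (hC.1 q' hq1)]
        by_cases hq2 : q' ∈ mxQ2 r
        · rw [if_neg hq1, if_pos hq2, if_pos (hC.2.1 q' hq2)]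
        · have hq3 : q' ∈ mxQ3 r := mxQ3_of_not hq0 hq1 hq2
          rw [if_neg hq1, if_neg hq2, if_pos (hC.2.2 q' hq3)]
      rw [h1, h2, mul_one]
    · rw [if_neg hC, mul_zero]
      symm
      simp only [not_and_or, not_forall, exists_prop] at hC
      rcases hC with ⟨q', hq', hv⟩ | ⟨q', hq', hv⟩ | ⟨q', hq', hv⟩ <;>
        apply Finset.prod_eq_zero (Finset.mem_univ q') <;> unfold mxH
      · rw [if_neg (mxQ1_not_Q0 hq'), if_pos hq', if_neg hv]
      · rw [if_neg (mxQ2_not_Q0 hq'), if_neg (mxQ2_not_Q1 hq'), if_pos hq', if_neg hv]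
      · rw [if_neg (mxQ3_not_Q0 hq'), if_neg (mxQ3_not_Q1 hq'), if_neg (mxQ3_not_Q2 hq'),
          if_neg hv]
  rw [Finset.sum_congr rfl fun A _ => key A]
  rw [← Fintype.prod_sum
    (fun q' j => mxH r σ q' j * (if q' = q then (if j = i then (1:ℝ) else 0) else 1))]
  rw [Finset.prod_eq_single_of_mem q (Finset.mem_univ q)]
  · rw [Fin.sum_univ_two]
    simp only [if_pos rfl]
    rcases fin2_zero_or_one i with h | h <;> subst h <;> simp
  · intro b _ hb
    rw [Fin.sum_univ_two]
    simp only [if_neg hb, mul_one]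
    exact mxH_add r σ b

/-- Marginal probability that agent `i` receives item `q`. -/
def mxMarg (r : Fin 2 → Fin m → ℝ) (q : Fin m) (i : Fin 2) : ℝ :=
  ∑ A : Fin m → Fin 2, randMixedProb r A * (if A q = i then 1 else 0)

/-- The winning probability as a function of own report `x` and opponent report `o`. -/
def mxP (x o : ℝ) : ℝ := if o < x then 1 else if x < o then 0 else 1/2

lemma card_perm2 : (Fintype.card (Equiv.Perm (Fin 2)) : ℝ) = 2 := by
  simp [Fintype.card_perm, Nat.factorial]

lemma mxMarg_eq (r : Fin 2 → Fin m → ℝ) (q : Fin m) (i : Fin 2) :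
    mxMarg r q i =
      if q ∈ mxQ0 r then 1/2
      else if q ∈ mxQ1 r then (if i = 0 then 1 else 0)
      else if q ∈ mxQ2 r then (if i = 1 then 1 else 0)
      else 1/2 := by
  unfold mxMarg randMixedProb
  have step : ∀ A : Fin m → Fin 2,
      (((1 : ℝ) / 2) ^ (mxQ0 r).card *
        ((∑ σ : Equiv.Perm (Fin 2),
          if (∀ q' ∈ mxQ1 r, A q' = 0) ∧ (∀ q' ∈ mxQ2 r, A q' = 1) ∧
             (∀ q' ∈ mxQ3 r, A q' = σ ⟨mxRank r q' % 2, Nat.mod_lt _ two_pos⟩)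
          then (1 : ℝ) else 0)
        / (Fintype.card (Equiv.Perm (Fin 2)) : ℝ))) * (if A q = i then (1:ℝ) else 0) =
      (∑ σ : Equiv.Perm (Fin 2),
        ((1:ℝ)/2) ^ (mxQ0 r).card *
          (if (∀ q' ∈ mxQ1 r, A q' = 0) ∧ (∀ q' ∈ mxQ2 r, A q' = 1) ∧
              (∀ q' ∈ mxQ3 r, A q' = σ ⟨mxRank r q' % 2, Nat.mod_lt _ two_pos⟩)
            then (1:ℝ) else 0) *
          (if A q = i then (1:ℝ) else 0)) / (Fintype.card (Equiv.Perm (Fin 2)) : ℝ) := by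
    intro A
    rw [Finset.sum_div, Finset.mul_sum, Finset.sum_div, Finset.sum_mul]
    exact Finset.sum_congr rfl fun σ _ => by ring
  rw [Finset.sum_congr rfl fun A _ => step A, ← Finset.sum_div, Finset.sum_comm]
  rw [Finset.sum_congr rfl fun σ _ => sum_ind_eq r q i σ]
  rw [card_perm2]
  by_cases h0 : q ∈ mxQ0 r
  · rw [if_pos h0]
    rw [Finset.sum_congr rfl fun σ _ => by unfold mxH; rw [if_pos h0]]
    rw [Finset.sum_const, Finset.card_univ, Fintype.card_perm]
    norm_num [Nat.factorial]
  rw [if_neg h0]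
  by_cases h1 : q ∈ mxQ1 r
  · rw [if_pos h1]
    rw [Finset.sum_congr rfl fun σ _ => by unfold mxH; rw [if_neg h0, if_pos h1]]
    rw [Finset.sum_const, Finset.card_univ, Fintype.card_perm]
    rcases fin2_zero_or_one i with h | h <;> subst h <;> norm_num [Nat.factorial]
  rw [if_neg h1]
  by_cases h2 : q ∈ mxQ2 r
  · rw [if_pos h2]
    rw [Finset.sum_congr rfl fun σ _ => by unfold mxH; rw [if_neg h0, if_neg h1, if_pos h2]]
    rw [Finset.sum_const, Finset.card_univ, Fintype.card_perm]
    rcases fin2_zero_or_one i with h | h <;> subst h <;> norm_num [Nat.factorial]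
  · rw [if_neg h2]
    rw [Finset.sum_congr rfl fun σ _ => by unfold mxH; rw [if_neg h0, if_neg h1, if_neg h2]]
    rw [sum_perm2_ind]

lemma randMixedExp_eq (r : Fin 2 → Fin m → ℝ) (vi : Fin m → ℝ) (i : Fin 2) :
    randMixedExp r vi i = ∑ q, vi q * mxMarg r q i := by
  unfold randMixedExp mxMarg
  have hsv : ∀ A : Fin m → Fin 2,
      sval vi (bundle A i) = ∑ q, vi q * (if A q = i then (1:ℝ) else 0) := by
    intro A
    unfold sval bundle
    rw [Finset.sum_filter]
    exact Finset.sum_congr rfl fun q _ => by by_cases h : A q = i <;> simp [h]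
  rw [Finset.sum_congr rfl fun A _ => by rw [hsv A, Finset.mul_sum]]
  rw [Finset.sum_comm]
  refine Finset.sum_congr rfl fun q _ => ?_
  rw [Finset.mul_sum]
  exact Finset.sum_congr rfl fun A _ => by ring

lemma mxMarg_P0 (r : Fin 2 → Fin m → ℝ) (q : Fin m) :
    mxMarg r q 0 = mxP (r 0 q) (r 1 q) := by
  rw [mxMarg_eq]
  unfold mxP
  simp only [mem_mxQ0, mem_mxQ1, mem_mxQ2]
  split_ifs <;> try rfl
  all_goals try norm_num
  all_goals exfalso
  all_goals simp_all
  all_goals linarith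

lemma mxMarg_P1 (r : Fin 2 → Fin m → ℝ) (q : Fin m) :
    mxMarg r q 1 = mxP (r 1 q) (r 0 q) := by
  rw [mxMarg_eq]
  unfold mxP
  simp only [mem_mxQ0, mem_mxQ1, mem_mxQ2]
  split_ifs <;> try rfl
  all_goals try norm_num
  all_goals exfalso
  all_goals simp_all
  all_goals linarith

lemma mxP_mono {x y : ℝ} (o : ℝ) (h : x ≤ y) : mxP x o ≤ mxP y o := by
  unfold mxP
  split_ifs <;> linarith

lemma mxP_key {ck gk a b o : ℝ} (hck : 0 < ck) (hgk : 0 < gk)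
    (ha : a = -ck ∨ a = 0 ∨ a = gk) (hb : b = -ck ∨ b = 0 ∨ b = gk) :
    a * mxP b o ≤ a * mxP a o := by
  rcases ha with ha | ha | ha
  · have hba : a ≤ b := by rcases hb with hb | hb | hb <;> rw [ha, hb] <;> linarith
    exact mul_le_mul_of_nonpos_left (mxP_mono o hba) (by rw [ha]; linarith)
  · rw [ha]; simp
  · have hba : b ≤ a := by rcases hb with hb | hb | hb <;> rw [ha, hb] <;> linarith
    exact mul_le_mul_of_nonneg_left (mxP_mono o hba) (by rw [ha]; linarith)

/-- in `RandMixed`, correcting a single item's report towards the truth never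
decreases the deviating agent's expected true utility. -/
theorem randMixed_single_item_correction (m : ℕ)
    (c g : Fin m → ℝ) (hc : ∀ q, 0 < c q) (hg : ∀ q, 0 < g q)
    (i : Fin 2) (vi : Fin m → ℝ) (hvi : ∀ q, vi q = -c q ∨ vi q = 0 ∨ vi q = g q)
    (k : Fin m)
    (rk : Fin 2 → Fin m → ℝ) (hrk : ∀ i' q, rk i' q = -c q ∨ rk i' q = 0 ∨ rk i' q = g q)
    (hmis : rk i k ≠ vi k) :
    randMixedExp (Function.update rk i (Function.update (rk i) k (vi k))) vi i ≥
      randMixedExp rk vi i := by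

  set r' : Fin 2 → Fin m → ℝ := Function.update rk i (Function.update (rk i) k (vi k)) with hr'
  have hne : ∀ (j : Fin 2) (q : Fin m), q ≠ k → r' j q = rk j q := by
    intro j q hq
    rw [hr', Function.update_apply]
    by_cases hj : j = i
    · rw [if_pos hj, Function.update_of_ne hq, hj]
    · rw [if_neg hj]
  have hat_i : r' i k = vi k := by
    rw [hr', Function.update_self, Function.update_self]
  have hat_o : ∀ j : Fin 2, j ≠ i → r' j k = rk j k := by
    intro j hj
    rw [hr', Function.update_of_ne hj]
  rw [ge_iff_le, randMixedExp_eq, randMixedExp_eq,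
      ← Finset.add_sum_erase _ _ (Finset.mem_univ k),
      ← Finset.add_sum_erase _ _ (Finset.mem_univ k)]
  have hrest : ∀ q ∈ Finset.univ.erase k,
      vi q * mxMarg rk q i = vi q * mxMarg r' q i := by
    intro q hq
    have hqk : q ≠ k := Finset.ne_of_mem_erase hq
    have h0 : r' 0 q = rk 0 q := hne 0 q hqk
    have h1 : r' 1 q = rk 1 q := hne 1 q hqk
    rw [mxMarg_eq, mxMarg_eq]
    simp only [mem_mxQ0, mem_mxQ1, mem_mxQ2, h0, h1]
  rw [Finset.sum_congr rfl hrest]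
  apply add_le_add_left
  rcases fin2_zero_or_one i with h | h <;> subst h
  · rw [mxMarg_P0, mxMarg_P0, hat_i, hat_o 1 (by decide)]
    exact mxP_key (hc k) (hg k) (hvi k) (hrk 0 k)
  · rw [mxMarg_P1, mxMarg_P1, hat_i, hat_o 0 (by decide)]
    exact mxP_key (hc k) (hg k) (hvi k) (hrk 1 k)


end RandMixedAux
end
end

section
/- The RandMixed mechanism for two agents is strategyproof in expectation: for every agent i ∈ {1, 2}, every true M-restricted additive valuation v_i, every report v̂_i, and every report v̂_{3-i} of the other agent, agent i's expected true utility under RandMixed(v_i, v̂_{3-i}) is at least his expected true utility under RandMixed(v̂_i, v̂_{3-i}). -/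
open Finset

attribute [local instance] Classical.propDecidable

noncomputable section

section AuxProof
variable {m : ℕ}

/-- single-item allocation probability -/
def prItem (r : Fin 2 → Fin m → ℝ) (i : Fin 2) (q : Fin m) : ℝ :=
  if r 0 q = 0 ∧ r 1 q = 0 then 1/2
  else if r 0 q > r 1 q then (if i = 0 then 1 else 0)
  else if r 0 q < r 1 q then (if i = 1 then 1 else 0)
  else 1/2

def target (r : Fin 2 → Fin m → ℝ) (σ : Equiv.Perm (Fin 2)) (q : Fin m) : Fin 2 :=
  if r 0 q > r 1 q then 0
  else if r 0 q < r 1 q then 1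
  else σ ⟨mxRank r q % 2, Nat.mod_lt _ two_pos⟩

lemma fin2_cases (t : Fin 2) : t = 0 ∨ t = 1 := by fin_cases t <;> simp

lemma cardP : Fintype.card (Equiv.Perm (Fin 2)) = 2 := by
  simp [Fintype.card_perm, Nat.factorial]

lemma perm_univ : (Finset.univ : Finset (Equiv.Perm (Fin 2))) = {1, Equiv.swap 0 1} := by
  symm
  apply Finset.eq_univ_of_card
  rw [Finset.card_insert_of_notMem, Finset.card_singleton, cardP]
  simp only [Finset.mem_singleton]
  intro h
  have h0 := DFunLike.congr_fun h (0 : Fin 2)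
  simp [Equiv.swap_apply_left] at h0

lemma one_ne_swap : (1 : Equiv.Perm (Fin 2)) ≠ Equiv.swap 0 1 := by
  intro h
  have h0 := DFunLike.congr_fun h (0 : Fin 2)
  simp [Equiv.swap_apply_left] at h0

lemma perm2_sum (x i : Fin 2) :
    (∑ σ : Equiv.Perm (Fin 2), if σ x = i then (1:ℝ) else 0) = 1 := by
  rw [perm_univ, Finset.sum_pair one_ne_swap]
  fin_cases x <;> fin_cases i <;>
    norm_num [Equiv.swap_apply_left, Equiv.swap_apply_right]

lemma cond_iff (r : Fin 2 → Fin m → ℝ) (σ : Equiv.Perm (Fin 2)) (A : Fin m → Fin 2) :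
    ((∀ q ∈ mxQ1 r, A q = 0) ∧ (∀ q ∈ mxQ2 r, A q = 1) ∧
      (∀ q ∈ mxQ3 r, A q = σ ⟨mxRank r q % 2, Nat.mod_lt _ two_pos⟩)) ↔
    (∀ q ∈ (mxQ0 r)ᶜ, A q = target r σ q) := by
  simp only [mxQ0, mxQ1, mxQ2, mxQ3, Finset.mem_compl, Finset.mem_filter, Finset.mem_univ,
    true_and, not_and]
  constructor
  · rintro ⟨h1, h2, h3⟩ q hq
    unfold target
    split_ifs with hgt hlt
    · exact h1 q hgt
    · exact h2 q hlt
    · have heq : r 0 q = r 1 q := le_antisymm (not_lt.1 hgt) (not_lt.1 hlt)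
      have hne : r 0 q ≠ 0 := by
        intro h0
        have h1' : r 1 q = 0 := by rw [← heq]; exact h0
        exact hq h0 h1'
      exact h3 q ⟨heq, hne⟩
  · intro h
    refine ⟨fun q hq => ?_, fun q hq => ?_, fun q hq => ?_⟩
    · have hnq : r 0 q = 0 → ¬ r 1 q = 0 := by
        intro h0 h1
        rw [h0, h1] at hq; exact lt_irrefl 0 hq
      rw [h q hnq]
      unfold target
      rw [if_pos hq]
    · have hnq : r 0 q = 0 → ¬ r 1 q = 0 := by
        intro h0 h1
        rw [h0, h1] at hq; exact lt_irrefl 0 hq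
      rw [h q hnq]
      unfold target
      rw [if_neg (asymm hq), if_pos hq]
    · have hnq : r 0 q = 0 → ¬ r 1 q = 0 := fun h0 _ => absurd h0 hq.2
      rw [h q hnq]
      unfold target
      rw [if_neg (by rw [hq.1]; exact lt_irrefl _), if_neg (by rw [hq.1]; exact lt_irrefl _)]

def Ffun (r : Fin 2 → Fin m → ℝ) (i : Fin 2) (q : Fin m) (σ : Equiv.Perm (Fin 2))
    (q' : Fin m) (a : Fin 2) : ℝ :=
  (if q' = q then (if a = i then (1:ℝ) else 0) else 1) *
  (if q' ∈ mxQ0 r then (1/2:ℝ) else if a = target r σ q' then 1 else 0)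

lemma prod_Ffun (r : Fin 2 → Fin m → ℝ) (i : Fin 2) (q : Fin m) (σ : Equiv.Perm (Fin 2))
    (A : Fin m → Fin 2) :
    (∏ q', Ffun r i q σ q' (A q')) =
      (1/2:ℝ) ^ (mxQ0 r).card *
      (if (∀ q'' ∈ mxQ1 r, A q'' = 0) ∧ (∀ q'' ∈ mxQ2 r, A q'' = 1) ∧
          (∀ q'' ∈ mxQ3 r, A q'' = σ ⟨mxRank r q'' % 2, Nat.mod_lt _ two_pos⟩)
        then (1:ℝ) else 0) *
      (if A q = i then (1:ℝ) else 0) := by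
  unfold Ffun
  rw [Finset.prod_mul_distrib]
  have h1 : (∏ q' : Fin m, if q' = q then (if A q' = i then (1:ℝ) else 0) else 1)
      = (if A q = i then (1:ℝ) else 0) :=
    Fintype.prod_ite_eq' q (fun q' => if A q' = i then (1:ℝ) else 0)
  have h2 : (∏ q' : Fin m, if q' ∈ mxQ0 r then (1/2:ℝ) else if A q' = target r σ q' then 1 else 0)
      = (1/2:ℝ) ^ (mxQ0 r).card *
        (if ∀ q'' ∈ (mxQ0 r)ᶜ, A q'' = target r σ q'' then (1:ℝ) else 0) := by
    rw [← Finset.prod_mul_prod_compl (mxQ0 r),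
      Finset.prod_congr rfl (fun x hx => if_pos hx), Finset.prod_const,
      Finset.prod_congr rfl (fun x (hx : x ∈ (mxQ0 r)ᶜ) => if_neg (Finset.mem_compl.1 hx)),
      Finset.prod_boole]
    by_cases hx : ∀ x ∈ (mxQ0 r)ᶜ, A x = target r σ x
    · rw [if_pos hx, if_pos hx]
    · rw [if_neg hx, if_neg hx]
  rw [h1, h2]
  have hcc : (if ∀ q'' ∈ (mxQ0 r)ᶜ, A q'' = target r σ q'' then (1:ℝ) else 0)
      = (if (∀ q'' ∈ mxQ1 r, A q'' = 0) ∧ (∀ q'' ∈ mxQ2 r, A q'' = 1) ∧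
          (∀ q'' ∈ mxQ3 r, A q'' = σ ⟨mxRank r q'' % 2, Nat.mod_lt _ two_pos⟩)
        then (1:ℝ) else 0) := by
    by_cases hx : ∀ q'' ∈ (mxQ0 r)ᶜ, A q'' = target r σ q''
    · rw [if_pos hx, if_pos ((cond_iff r σ A).2 hx)]
    · rw [if_neg hx, if_neg (fun hh => hx ((cond_iff r σ A).1 hh))]
  rw [hcc]
  ring

lemma marginal (r : Fin 2 → Fin m → ℝ) (i : Fin 2) (q : Fin m) :
    (∑ A : Fin m → Fin 2, randMixedProb r A * (if A q = i then (1:ℝ) else 0))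
      = prItem r i q := by
  have hstep : ∀ A : Fin m → Fin 2,
      randMixedProb r A * (if A q = i then (1:ℝ) else 0)
        = ∑ σ : Equiv.Perm (Fin 2), (1/2:ℝ) * ∏ q', Ffun r i q σ q' (A q') := by
    intro A
    unfold randMixedProb
    simp_rw [prod_Ffun]
    rw [eq_comm]
    have hterm : ∀ σ : Equiv.Perm (Fin 2),
        (1/2:ℝ) * ((1/2:ℝ) ^ (mxQ0 r).card *
          (if (∀ q'' ∈ mxQ1 r, A q'' = 0) ∧ (∀ q'' ∈ mxQ2 r, A q'' = 1) ∧
              (∀ q'' ∈ mxQ3 r, A q'' = σ ⟨mxRank r q'' % 2, Nat.mod_lt _ two_pos⟩)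
            then (1:ℝ) else 0) *
          (if A q = i then (1:ℝ) else 0))
        = (if (∀ q'' ∈ mxQ1 r, A q'' = 0) ∧ (∀ q'' ∈ mxQ2 r, A q'' = 1) ∧
              (∀ q'' ∈ mxQ3 r, A q'' = σ ⟨mxRank r q'' % 2, Nat.mod_lt _ two_pos⟩)
            then (1:ℝ) else 0)
          * ((1/2:ℝ) * ((1/2:ℝ) ^ (mxQ0 r).card * (if A q = i then (1:ℝ) else 0))) :=
      fun σ => by ring
    rw [Finset.sum_congr rfl fun σ _ => hterm σ, ← Finset.sum_mul]
    simp only [cardP, Nat.cast_ofNat]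
    ring
  rw [Finset.sum_congr rfl fun A _ => hstep A, Finset.sum_comm]
  have hA : ∀ σ : Equiv.Perm (Fin 2),
      (∑ A : Fin m → Fin 2, (1/2:ℝ) * ∏ q', Ffun r i q σ q' (A q'))
      = (1/2:ℝ) * ∏ q' : Fin m, ∑ a : Fin 2, Ffun r i q σ q' a := by
    intro σ
    rw [← Finset.mul_sum, ← Fintype.prod_sum]
  rw [Finset.sum_congr rfl fun σ _ => hA σ]
  have hs : ∀ σ : Equiv.Perm (Fin 2), ∀ q' : Fin m, (∑ a : Fin 2, Ffun r i q σ q' a)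
      = if q' = q then (if q ∈ mxQ0 r then (1/2:ℝ)
          else if target r σ q = i then 1 else 0) else 1 := by
    intro σ q'
    rw [Fin.sum_univ_two]
    unfold Ffun
    by_cases h : q' = q
    · subst h
      by_cases h0 : q' ∈ mxQ0 r
      · simp only [h0, if_true, if_pos rfl]
        fin_cases i <;> norm_num
      · simp only [h0, if_false, if_pos rfl]
        rcases fin2_cases (target r σ q') with ht | ht <;> rw [ht] <;>
          fin_cases i <;> norm_num
    · simp only [h, if_false, one_mul]
      by_cases h0 : q' ∈ mxQ0 r
      · simp only [h0, if_true]; norm_num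
      · simp only [h0, if_false]
        rcases fin2_cases (target r σ q') with ht | ht <;> rw [ht] <;> norm_num
  have hw : ∀ σ : Equiv.Perm (Fin 2),
      (∏ q' : Fin m, ∑ a : Fin 2, Ffun r i q σ q' a)
      = (if q ∈ mxQ0 r then (1/2:ℝ) else if target r σ q = i then 1 else 0) := by
    intro σ
    rw [Finset.prod_congr rfl fun q' _ => hs σ q']
    exact Fintype.prod_ite_eq' q (fun _ => if q ∈ mxQ0 r then (1/2:ℝ)
      else if target r σ q = i then 1 else 0)
  rw [Finset.sum_congr rfl fun σ _ => by rw [hw σ]]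
  by_cases hq0 : q ∈ mxQ0 r
  · have hq0' : r 0 q = 0 ∧ r 1 q = 0 := by simpa [mxQ0] using hq0
    simp only [hq0, if_true]
    rw [Finset.sum_const, Finset.card_univ, cardP]
    unfold prItem
    rw [if_pos hq0']
    norm_num
  · have hq0' : ¬(r 0 q = 0 ∧ r 1 q = 0) := by simpa [mxQ0] using hq0
    simp only [hq0, if_false]
    unfold prItem
    rw [if_neg hq0']
    rcases lt_trichotomy (r 1 q) (r 0 q) with hgt | heq | hlt
    · have ht : ∀ σ : Equiv.Perm (Fin 2), target r σ q = (0 : Fin 2) :=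
        fun σ => if_pos hgt
      simp_rw [ht]
      rw [Finset.sum_const, Finset.card_univ, cardP, if_pos hgt]
      fin_cases i <;> norm_num
    · have ht : ∀ σ : Equiv.Perm (Fin 2),
          target r σ q = σ ⟨mxRank r q % 2, Nat.mod_lt _ two_pos⟩ := by
        intro σ
        unfold target
        rw [if_neg (by rw [heq]; exact lt_irrefl _), if_neg (by rw [heq]; exact lt_irrefl _)]
      simp_rw [ht]
      rw [← Finset.mul_sum, perm2_sum]
      rw [if_neg (by rw [heq]; exact lt_irrefl _), if_neg (by rw [heq]; exact lt_irrefl _)]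
      norm_num
    · have ht : ∀ σ : Equiv.Perm (Fin 2), target r σ q = (1 : Fin 2) := by
        intro σ
        unfold target
        rw [if_neg (asymm hlt), if_pos hlt]
      simp_rw [ht]
      rw [Finset.sum_const, Finset.card_univ, cardP, if_neg (asymm hlt), if_pos hlt]
      fin_cases i <;> norm_num

lemma exp_eq (r : Fin 2 → Fin m → ℝ) (vi : Fin m → ℝ) (i : Fin 2) :
    randMixedExp r vi i = ∑ q : Fin m, vi q * prItem r i q := by
  unfold randMixedExp
  have hb : ∀ A : Fin m → Fin 2, sval vi (bundle A i)
      = ∑ q : Fin m, vi q * (if A q = i then (1:ℝ) else 0) := by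
    intro A
    unfold sval bundle
    rw [Finset.sum_filter]
    refine Finset.sum_congr rfl fun q _ => ?_
    by_cases h : A q = i <;> simp [h]
  rw [Finset.sum_congr rfl fun A _ => by rw [hb A, Finset.mul_sum], Finset.sum_comm]
  refine Finset.sum_congr rfl fun q _ => ?_
  rw [← marginal r i q, Finset.mul_sum]
  refine Finset.sum_congr rfl fun A _ => ?_
  ring

lemma key (c g a b t : ℝ) (hc : 0 < c) (hg : 0 < g)
    (ha : a = -c ∨ a = 0 ∨ a = g) (hb : b = -c ∨ b = 0 ∨ b = g)
    (ht : t = -c ∨ t = 0 ∨ t = g) :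
    t * (if a = 0 ∧ b = 0 then (1/2:ℝ) else if a > b then 1 else if a < b then 0 else 1/2)
    ≤ t * (if t = 0 ∧ b = 0 then (1/2:ℝ) else if t > b then 1 else if t < b then 0 else 1/2) := by
  have h1 : -c < 0 := by linarith
  have h3 : -c < g := by linarith
  have h4 : ¬ ((0:ℝ) < -c) := by linarith
  have h5 : ¬ (g < (0:ℝ)) := by linarith
  have h6 : ¬ (g < -c) := by linarith
  have h7 : ¬ (g = 0) := by linarith
  have h8 : ¬ (-c = 0) := by linarith
  rcases ht with h | h | h <;> rcases ha with h' | h' | h' <;> rcases hb with h'' | h'' | h'' <;>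
    subst h <;> subst h' <;> subst h'' <;>
    simp only [h1, h3, h4, h5, h6, h7, h8, hg, gt_iff_lt, lt_self_iff_false, and_true,
      true_and, and_false, false_and, if_true, if_false, not_false_iff, and_self,
      eq_self_iff_true, ite_true, ite_false] <;>
    linarith

lemma key' (c g a b t : ℝ) (hc : 0 < c) (hg : 0 < g)
    (ha : a = -c ∨ a = 0 ∨ a = g) (hb : b = -c ∨ b = 0 ∨ b = g)
    (ht : t = -c ∨ t = 0 ∨ t = g) :
    t * (if b = 0 ∧ a = 0 then (1/2:ℝ) else if b > a then 0 else if b < a then 1 else 1/2)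
    ≤ t * (if b = 0 ∧ t = 0 then (1/2:ℝ) else if b > t then 0 else if b < t then 1 else 1/2) := by
  have h1 : -c < 0 := by linarith
  have h3 : -c < g := by linarith
  have h4 : ¬ ((0:ℝ) < -c) := by linarith
  have h5 : ¬ (g < (0:ℝ)) := by linarith
  have h6 : ¬ (g < -c) := by linarith
  have h7 : ¬ (g = 0) := by linarith
  have h8 : ¬ (-c = 0) := by linarith
  rcases ht with h | h | h <;> rcases ha with h' | h' | h' <;> rcases hb with h'' | h'' | h'' <;>
    subst h <;> subst h' <;> subst h'' <;>
    simp only [h1, h3, h4, h5, h6, h7, h8, hg, gt_iff_lt, lt_self_iff_false, and_true,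
      true_and, and_false, false_and, if_true, if_false, not_false_iff, and_self,
      eq_self_iff_true, ite_true, ite_false] <;>
    linarith

end AuxProof
/-- `RandMixed` is strategyproof in expectation: for every agent `i`, every true
M-restricted additive valuation `vi`, every report of `i`, and every report of the other
agent (the full reported profile being `r`), agent `i`'s expected true utility when reporting
truthfully is at least his expected true utility under `r`. -/
theorem randMixed_SPIE (m : ℕ)
    (c g : Fin m → ℝ) (hc : ∀ q, 0 < c q) (hg : ∀ q, 0 < g q)
    (i : Fin 2) (vi : Fin m → ℝ) (hvi : ∀ q, vi q = -c q ∨ vi q = 0 ∨ vi q = g q)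
    (r : Fin 2 → Fin m → ℝ) (hr : ∀ i' q, r i' q = -c q ∨ r i' q = 0 ∨ r i' q = g q) :
    randMixedExp (Function.update r i vi) vi i ≥ randMixedExp r vi i := by
  rw [exp_eq, exp_eq, ge_iff_le]
  refine Finset.sum_le_sum fun q _ => ?_
  rcases fin2_cases i with hi | hi <;> subst hi
  · have hu0 : Function.update r 0 vi 0 q = vi q := by
      rw [Function.update_self]
    have hu1 : Function.update r 0 vi 1 q = r 1 q := by
      rw [Function.update_of_ne (by decide : (1 : Fin 2) ≠ 0)]
    unfold prItem
    rw [hu0, hu1]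
    simp only [show ((0:Fin 2) = 0) = True from by simp, show ((0:Fin 2) = 1) = False from by simp,
      if_true, if_false]
    exact key (c q) (g q) (r 0 q) (r 1 q) (vi q) (hc q) (hg q) (hr 0 q) (hr 1 q) (hvi q)
  · have hu1 : Function.update r 1 vi 1 q = vi q := by
      rw [Function.update_self]
    have hu0 : Function.update r 1 vi 0 q = r 0 q := by
      rw [Function.update_of_ne (by decide : (0 : Fin 2) ≠ 1)]
    unfold prItem
    rw [hu0, hu1]
    simp only [show ((1:Fin 2) = 0) = False from by simp, show ((1:Fin 2) = 1) = True from by simp,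
      if_true, if_false]
    exact key' (c q) (g q) (r 1 q) (r 0 q) (vi q) (hc q) (hg q) (hr 1 q) (hr 0 q) (hvi q)
end
end

section
/- For every profile (v_1, v_2) of M-restricted additive valuations of two agents over mixed items, the randomized allocation returned by RandMixed on this profile is ex-ante Pareto optimal and ex-ante utilitarian welfare maximizing among fractional allocations, and is ex-post Pareto optimal and ex-post utilitarian welfare maximizing among deterministic allocations. -/
open Finset

attribute [local instance] Classical.propDecidable

noncomputable section

/-- `a` is a fractional allocation. -/
def IsFrac {m n : ℕ} (a : Fin m → Fin n → ℝ) : Prop :=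
  (∀ j i, 0 ≤ a j i) ∧ ∀ j, ∑ i, a j i = 1

/-- The fractional allocation implemented by the randomized allocation `p`. -/
def implFrac {m n : ℕ} (p : (Fin m → Fin n) → ℝ) : Fin m → Fin n → ℝ :=
  fun j i => ∑ A, p A * (if A j = i then 1 else 0)

/-- Value of agent with item values `vi` for the fractional bundle of agent `i` in `a`. -/
def fval {m n : ℕ} (vi : Fin m → ℝ) (a : Fin m → Fin n → ℝ) (i : Fin n) : ℝ :=
  ∑ j, a j i * vi j

/-- Deterministic allocation `B` Pareto dominates `A`. -/
def ParetoDom {m n : ℕ} (v : Fin n → Fin m → ℝ) (B A : Fin m → Fin n) : Prop :=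
  (∀ i, sval (v i) (bundle B i) ≥ sval (v i) (bundle A i)) ∧
  ∃ i, sval (v i) (bundle B i) > sval (v i) (bundle A i)

section Aux

def mxCond {m : ℕ} (v : Fin 2 → Fin m → ℝ) (σ : Equiv.Perm (Fin 2)) (A : Fin m → Fin 2) : Prop :=
  (∀ q ∈ mxQ1 v, A q = 0) ∧ (∀ q ∈ mxQ2 v, A q = 1) ∧
  (∀ q ∈ mxQ3 v, A q = σ ⟨mxRank v q % 2, Nat.mod_lt _ two_pos⟩)

def mxDef {m : ℕ} (v : Fin 2 → Fin m → ℝ) (σ : Equiv.Perm (Fin 2)) (j : Fin m) : Fin 2 :=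
  if j ∈ mxQ1 v then 0 else if j ∈ mxQ2 v then 1
  else σ ⟨mxRank v j % 2, Nat.mod_lt _ two_pos⟩

lemma mx_cases {m : ℕ} (v : Fin 2 → Fin m → ℝ) (j : Fin m) :
    j ∈ mxQ0 v ∨ j ∈ mxQ1 v ∨ j ∈ mxQ2 v ∨ j ∈ mxQ3 v := by
  simp only [mxQ0, mxQ1, mxQ2, mxQ3, mem_filter, mem_univ, true_and]
  rcases lt_trichotomy (v 0 j) (v 1 j) with h | h | h
  · exact Or.inr (Or.inr (Or.inl h))
  · by_cases h0 : v 0 j = 0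
    · exact Or.inl ⟨h0, h ▸ h0⟩
    · exact Or.inr (Or.inr (Or.inr ⟨h, h0⟩))
  · exact Or.inr (Or.inl h)

lemma cond_iff_s17 {m : ℕ} (v : Fin 2 → Fin m → ℝ) (σ : Equiv.Perm (Fin 2)) (A : Fin m → Fin 2) :
    mxCond v σ A ↔ ∀ j ∉ mxQ0 v, A j = mxDef v σ j := by
  have hQ : ∀ j : Fin m,
      (j ∈ mxQ0 v ↔ v 0 j = 0 ∧ v 1 j = 0) ∧ (j ∈ mxQ1 v ↔ v 1 j < v 0 j) ∧
      (j ∈ mxQ2 v ↔ v 0 j < v 1 j) ∧ (j ∈ mxQ3 v ↔ v 0 j = v 1 j ∧ v 0 j ≠ 0) := by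
    intro j
    simp [mxQ0, mxQ1, mxQ2, mxQ3, mem_filter]
  constructor
  · rintro ⟨h1, h2, h3⟩ j hj
    rcases mx_cases v j with h | h | h | h
    · exact absurd h hj
    · rw [mxDef, if_pos h]; exact h1 j h
    · have hn1 : j ∉ mxQ1 v := by
        intro hc; have := ((hQ j).2.1).mp hc; have := ((hQ j).2.2.1).mp h; linarith
      rw [mxDef, if_neg hn1, if_pos h]; exact h2 j h
    · have he := ((hQ j).2.2.2).mp h
      have hn1 : j ∉ mxQ1 v := by
        intro hc; have := ((hQ j).2.1).mp hc; linarith [he.1]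
      have hn2 : j ∉ mxQ2 v := by
        intro hc; have := ((hQ j).2.2.1).mp hc; linarith [he.1]
      rw [mxDef, if_neg hn1, if_neg hn2]; exact h3 j h
  · intro h
    refine ⟨fun q hq => ?_, fun q hq => ?_, fun q hq => ?_⟩
    · have hn0 : q ∉ mxQ0 v := by
        intro hc; have := ((hQ q).1).mp hc; have := ((hQ q).2.1).mp hq; linarith [this]
      rw [h q hn0, mxDef, if_pos hq]
    · have hn0 : q ∉ mxQ0 v := by
        intro hc; have h0 := ((hQ q).1).mp hc; have := ((hQ q).2.2.1).mp hq; linarith [h0.1, h0.2]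
      have hn1 : q ∉ mxQ1 v := by
        intro hc; have := ((hQ q).2.1).mp hc; have := ((hQ q).2.2.1).mp hq; linarith
      rw [h q hn0, mxDef, if_neg hn1, if_pos hq]
    · have he := ((hQ q).2.2.2).mp hq
      have hn0 : q ∉ mxQ0 v := by
        intro hc; have h0 := ((hQ q).1).mp hc; exact he.2 h0.1
      have hn1 : q ∉ mxQ1 v := by
        intro hc; have := ((hQ q).2.1).mp hc; linarith [he.1]
      have hn2 : q ∉ mxQ2 v := by
        intro hc; have := ((hQ q).2.2.1).mp hc; linarith [he.1]
      rw [h q hn0, mxDef, if_neg hn1, if_neg hn2]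

variable {m : ℕ} (v : Fin 2 → Fin m → ℝ)

lemma prod_eq (σ : Equiv.Perm (Fin 2)) (A : Fin m → Fin 2) :
    (∏ j, (if j ∈ mxQ0 v then (1/2:ℝ) else if A j = mxDef v σ j then 1 else 0))
      = ((1:ℝ)/2) ^ (mxQ0 v).card * (if mxCond v σ A then 1 else 0) := by
  rw [← Finset.prod_mul_prod_compl (mxQ0 v)]
  congr 1
  · rw [Finset.prod_congr rfl (fun j hj => if_pos hj), Finset.prod_const]
  · rw [Finset.prod_congr rfl (fun j hj => if_neg (Finset.mem_compl.mp hj)),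
      Finset.prod_boole]
    by_cases h : mxCond v σ A
    · rw [if_pos h, if_pos fun j hj => (cond_iff_s17 v σ A).mp h j (Finset.mem_compl.mp hj)]
    · rw [if_neg h, if_neg fun hall =>
        h ((cond_iff_s17 v σ A).mpr fun j hj => hall j (Finset.mem_compl.mpr hj))]

lemma prob_eq (A : Fin m → Fin 2) :
    randMixedProb v A = (∑ σ : Equiv.Perm (Fin 2),
      ∏ j, (if j ∈ mxQ0 v then (1/2:ℝ) else if A j = mxDef v σ j then 1 else 0)) / 2 := by
  have hcard : (Fintype.card (Equiv.Perm (Fin 2)) : ℝ) = 2 := by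
    simp [Fintype.card_perm]
  have hpe : ∀ σ : Equiv.Perm (Fin 2),
      (∏ j, (if j ∈ mxQ0 v then (1/2:ℝ) else if A j = mxDef v σ j then 1 else 0))
        = ((1:ℝ)/2) ^ (mxQ0 v).card *
          (if (∀ q ∈ mxQ1 v, A q = 0) ∧ (∀ q ∈ mxQ2 v, A q = 1) ∧
             (∀ q ∈ mxQ3 v, A q = σ ⟨mxRank v q % 2, Nat.mod_lt _ two_pos⟩)
           then (1:ℝ) else 0) := by
    intro σ
    rw [prod_eq]
    simp only [mxCond]
    congr 1
    split_ifs with hh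
    · exact if_pos hh
    · exact if_neg hh
  rw [randMixedProb, hcard, Finset.sum_congr rfl (fun σ _ => hpe σ), ← Finset.mul_sum]
  ring

lemma prob_sum : ∑ A : Fin m → Fin 2, randMixedProb v A = 1 := by
  simp only [prob_eq]
  rw [← Finset.sum_div, Finset.sum_comm]
  have hA : ∀ σ : Equiv.Perm (Fin 2),
      (∑ A : Fin m → Fin 2,
        ∏ j, (if j ∈ mxQ0 v then (1/2:ℝ) else if A j = mxDef v σ j then 1 else 0)) = 1 := by
    intro σ
    have hone : ∀ j : Fin m,
        (∑ i : Fin 2, if j ∈ mxQ0 v then (1/2:ℝ) else if i = mxDef v σ j then 1 else 0) = 1 := by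
      intro j
      by_cases hj : j ∈ mxQ0 v
      · norm_num [hj, Fin.sum_univ_two]
      · simp [hj, Finset.sum_ite_eq']
    rw [← Fintype.prod_sum
      (fun j i => if j ∈ mxQ0 v then (1/2:ℝ) else if i = mxDef v σ j then 1 else 0)]
    rw [Finset.prod_congr rfl fun j _ => hone j, Finset.prod_const_one]
  rw [Finset.sum_congr rfl (fun σ _ => hA σ), Finset.sum_const]
  simp [Fintype.card_perm]

lemma prob_nonneg (A : Fin m → Fin 2) : 0 ≤ randMixedProb v A := by
  rw [prob_eq]
  apply div_nonneg _ (by norm_num)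
  refine Finset.sum_nonneg fun σ _ => Finset.prod_nonneg fun j _ => ?_
  split <;> norm_num
  split <;> norm_num

lemma pos_cond (A : Fin m → Fin 2) (h : 0 < randMixedProb v A) : ∃ σ, mxCond v σ A := by
  by_contra hc
  push_neg at hc
  have h0 : randMixedProb v A = 0 := by
    rw [prob_eq, Finset.sum_congr rfl (fun σ _ => prod_eq v σ A)]
    rw [Finset.sum_congr rfl (fun σ _ => by rw [if_neg (hc σ), mul_zero])]
    simp
  linarith

lemma cond_max (σ : Equiv.Perm (Fin 2)) (A : Fin m → Fin 2) (h : mxCond v σ A) (j : Fin m) :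
    v (A j) j = max (v 0 j) (v 1 j) := by
  obtain ⟨h1, h2, h3⟩ := h
  rcases mx_cases v j with hq | hq | hq | hq
  · have h0 : v 0 j = 0 ∧ v 1 j = 0 := by simpa [mxQ0] using hq
    have hz : ∀ i : Fin 2, v i j = 0 := by
      intro i; fin_cases i; exacts [h0.1, h0.2]
    rw [hz (A j), h0.1, h0.2]; simp
  · have hlt : v 1 j < v 0 j := by simpa [mxQ1] using hq
    rw [h1 j hq]; exact (max_eq_left hlt.le).symm
  · have hlt : v 0 j < v 1 j := by simpa [mxQ2] using hq
    rw [h2 j hq]; exact (max_eq_right hlt.le).symm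
  · have he : v 0 j = v 1 j := ((by simpa [mxQ3] using hq : v 0 j = v 1 j ∧ v 0 j ≠ 0)).1
    have hz : ∀ i : Fin 2, v i j = v 0 j := by
      intro i; fin_cases i; exacts [rfl, he.symm]
    rw [hz (A j), ← he, max_self]


lemma welfare_det {m : ℕ} (w : Fin 2 → Fin m → ℝ) (A : Fin m → Fin 2) :
    ∑ i, sval (w i) (bundle A i) = ∑ j, w (A j) j := by
  simp only [sval, bundle]
  have key : ∀ i : Fin 2, ∑ j ∈ univ.filter (fun j => A j = i), w i j
      = ∑ j ∈ univ.filter (fun j => A j = i), w (A j) j := fun i =>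
    Finset.sum_congr rfl fun j hj => by rw [(Finset.mem_filter.mp hj).2]
  rw [Finset.sum_congr rfl fun i _ => key i]
  exact Finset.sum_fiberwise univ A fun j => w (A j) j

lemma det_welfare_le (A : Fin m → Fin 2) :
    ∑ i, sval (v i) (bundle A i) ≤ ∑ j, max (v 0 j) (v 1 j) := by
  rw [welfare_det]
  refine Finset.sum_le_sum fun j _ => ?_
  have : A j = 0 ∨ A j = 1 := by omega
  rcases this with h | h <;> rw [h]
  exacts [le_max_left _ _, le_max_right _ _]

lemma det_welfare_eq (A : Fin m → Fin 2) (h : 0 < randMixedProb v A) :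
    ∑ i, sval (v i) (bundle A i) = ∑ j, max (v 0 j) (v 1 j) := by
  obtain ⟨σ, hσ⟩ := pos_cond v A h
  rw [welfare_det]
  exact Finset.sum_congr rfl fun j _ => cond_max v σ A hσ j

lemma frac_welfare_le (b : Fin m → Fin 2 → ℝ) (hb : IsFrac b) :
    ∑ i, fval (v i) b i ≤ ∑ j, max (v 0 j) (v 1 j) := by
  simp only [fval]
  rw [Finset.sum_comm]
  refine Finset.sum_le_sum fun j _ => ?_
  calc ∑ i, b j i * v i j ≤ ∑ i, b j i * max (v 0 j) (v 1 j) := by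
        refine Finset.sum_le_sum fun i _ => mul_le_mul_of_nonneg_left ?_ (hb.1 j i)
        have : i = 0 ∨ i = 1 := by omega
        rcases this with h | h <;> rw [h]
        exacts [le_max_left _ _, le_max_right _ _]
    _ = max (v 0 j) (v 1 j) := by rw [← Finset.sum_mul, hb.2 j, one_mul]

lemma impl_welfare_eq :
    ∑ i, fval (v i) (implFrac (randMixedProb v)) i = ∑ j, max (v 0 j) (v 1 j) := by
  simp only [fval, implFrac, Finset.sum_mul]
  rw [Finset.sum_comm]
  have hj : ∀ j : Fin m, ∑ i : Fin 2, ∑ A : Fin m → Fin 2,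
      randMixedProb v A * (if A j = i then 1 else 0) * v i j
      = ∑ A : Fin m → Fin 2, randMixedProb v A * v (A j) j := by
    intro j
    rw [Finset.sum_comm]
    refine Finset.sum_congr rfl fun A _ => ?_
    rw [Finset.sum_congr rfl (fun i _ => by
      rw [mul_ite, mul_one, mul_zero, ite_mul, zero_mul] :
        ∀ i ∈ univ, randMixedProb v A * (if A j = i then 1 else 0) * v i j
          = if A j = i then randMixedProb v A * v i j else 0)]
    rw [Finset.sum_ite_eq]
    simp
  rw [Finset.sum_congr rfl fun j _ => hj j, Finset.sum_comm]
  have hper : ∀ A : Fin m → Fin 2,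
      ∑ j, randMixedProb v A * v (A j) j
        = randMixedProb v A * ∑ j, max (v 0 j) (v 1 j) := by
    intro A
    rw [← Finset.mul_sum]
    rcases (prob_nonneg v A).eq_or_lt with h | h
    · rw [← h, zero_mul, zero_mul]
    · congr 1
      obtain ⟨σ, hσ⟩ := pos_cond v A h
      exact Finset.sum_congr rfl fun j _ => cond_max v σ A hσ j
  rw [Finset.sum_congr rfl fun A _ => hper A, ← Finset.sum_mul, prob_sum, one_mul]

end Aux

/-- on any truthful M-restricted additive mixed-items profile for two agents,
`RandMixed` is ex-ante PO and UWM among fractional allocations, and ex-post PO and UWM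
among deterministic allocations. -/
theorem randMixed_BoBW_efficiency (m : ℕ)
    (c g : Fin m → ℝ) (hc : ∀ q, 0 < c q) (hg : ∀ q, 0 < g q)
    (v : Fin 2 → Fin m → ℝ) (hv : ∀ i q, v i q = -c q ∨ v i q = 0 ∨ v i q = g q) :
    -- ex-ante Pareto optimality among fractional allocations
    (¬ ∃ b : Fin m → Fin 2 → ℝ, IsFrac b ∧
        (∀ i, fval (v i) b i ≥ fval (v i) (implFrac (randMixedProb v)) i) ∧
        ∃ i, fval (v i) b i > fval (v i) (implFrac (randMixedProb v)) i) ∧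
    -- ex-ante utilitarian welfare maximization among fractional allocations
    (∀ b : Fin m → Fin 2 → ℝ, IsFrac b →
        ∑ i, fval (v i) b i ≤ ∑ i, fval (v i) (implFrac (randMixedProb v)) i) ∧
    -- ex-post Pareto optimality
    (∀ A : Fin m → Fin 2, 0 < randMixedProb v A →
        ¬ ∃ B : Fin m → Fin 2, ParetoDom v B A) ∧
    -- ex-post utilitarian welfare maximization
    (∀ A : Fin m → Fin 2, 0 < randMixedProb v A → ∀ B : Fin m → Fin 2,
        ∑ i, sval (v i) (bundle B i) ≤ ∑ i, sval (v i) (bundle A i)) := by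
  refine ⟨?_, ?_, ?_, ?_⟩
  · rintro ⟨b, hb, hge, i, hgt⟩
    have h1 : ∑ i, fval (v i) (implFrac (randMixedProb v)) i < ∑ i, fval (v i) b i :=
      Finset.sum_lt_sum (fun i _ => hge i) ⟨i, Finset.mem_univ i, hgt⟩
    have h2 := frac_welfare_le v b hb
    rw [impl_welfare_eq v] at h1
    linarith
  · intro b hb
    rw [impl_welfare_eq v]
    exact frac_welfare_le v b hb
  · rintro A hA ⟨B, hge, i, hgt⟩
    have h1 : ∑ i, sval (v i) (bundle A i) < ∑ i, sval (v i) (bundle B i) :=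
      Finset.sum_lt_sum (fun i _ => hge i) ⟨i, Finset.mem_univ i, hgt⟩
    have h2 := det_welfare_le v B
    rw [det_welfare_eq v A hA] at h1
    linarith
  · intro A hA B
    rw [det_welfare_eq v A hA]
    exact det_welfare_le v B
end
end

section
/- Consider four agents and eight indivisible chores e_1, ..., e_8 with additive valuations: v_1(e_j) = v_2(e_j) = -10 for all j ∈ {1, ..., 8}; v_3(e_1) = v_4(e_1) = -73 and v_3(e_j) = v_4(e_j) = -1 for all j ∈ {2, ..., 8}. Then no allocation of the eight chores to the four agents is simultaneously envy-free up to one item, equitable up to one item, and Pareto optimal. -/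
open Finset

attribute [local instance] Classical.propDecidable

noncomputable section

/-- Envy-freeness up to one item. -/
def EF1 {m n : ℕ} (v : Fin n → Fin m → ℝ) (A : Fin m → Fin n) : Prop :=
  ∀ i j : Fin n, sval (v i) (bundle A i) ≥ sval (v i) (bundle A j) ∨
    ∃ e ∈ bundle A i ∪ bundle A j,
      sval (v i) ((bundle A i).erase e) ≥ sval (v i) ((bundle A j).erase e)

/-- Equitability up to one item. -/
def EQ1 {m n : ℕ} (v : Fin n → Fin m → ℝ) (A : Fin m → Fin n) : Prop :=
  ∀ i j : Fin n, sval (v i) (bundle A i) ≥ sval (v j) (bundle A j) ∨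
    ∃ e ∈ bundle A i ∪ bundle A j,
      sval (v i) ((bundle A i).erase e) ≥ sval (v j) ((bundle A j).erase e)

/-- Pareto optimality. -/
def ParetoOpt {m n : ℕ} (v : Fin n → Fin m → ℝ) (A : Fin m → Fin n) : Prop :=
  ¬ ∃ B, ParetoDom v B A

lemma mem_bundle {m n : ℕ} {A : Fin m → Fin n} {j : Fin m} {i : Fin n} :
    j ∈ bundle A i ↔ A j = i := by simp [bundle]

lemma bundle_erase_of_ne {m n : ℕ} {A : Fin m → Fin n} {i : Fin n} {e : Fin m}
    (h : A e ≠ i) : (bundle A i).erase e = bundle A i :=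
  Finset.erase_eq_of_notMem (by simp [mem_bundle, h])

lemma sval_eq_neg_card {m : ℕ} {f : Fin m → ℝ} {S : Finset (Fin m)}
    (h : ∀ j ∈ S, f j = -1) : sval f S = -(S.card : ℝ) := by
  unfold sval
  rw [Finset.sum_congr rfl h, Finset.sum_const]
  simp

lemma sval_le_neg_card {m : ℕ} {f : Fin m → ℝ} {S : Finset (Fin m)}
    (h : ∀ j, f j ≤ -1) : sval f S ≤ -(S.card : ℝ) := by
  unfold sval
  calc ∑ j ∈ S, f j ≤ ∑ _j ∈ S, (-1 : ℝ) := Finset.sum_le_sum (fun j _ => h j)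
  _ = -(S.card : ℝ) := by simp

lemma sval_const {m : ℕ} {f : Fin m → ℝ} {c : ℝ} (h : ∀ j, f j = c)
    (S : Finset (Fin m)) : sval f S = c * S.card := by
  unfold sval
  rw [Finset.sum_congr rfl (fun j _ => h j), Finset.sum_const, nsmul_eq_mul, mul_comm]

lemma sval_bundle {m n : ℕ} (f : Fin m → ℝ) (A : Fin m → Fin n) (i : Fin n) :
    sval f (bundle A i) = ∑ j, if A j = i then f j else 0 := by
  unfold sval bundle
  rw [Finset.sum_filter]

lemma card_sum_bundles {m k : ℕ} (A : Fin m → Fin k) :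
    ∑ i, (bundle A i).card = m := by
  have h := Finset.card_eq_sum_card_fiberwise
      (f := A) (s := (univ : Finset (Fin m))) (t := (univ : Finset (Fin k)))
      (fun x _ => mem_univ _)
  simpa [bundle] using h.symm

lemma card_le_eight (S : Finset (Fin 8)) : S.card ≤ 8 :=
  le_trans (Finset.card_le_univ _) (by simp)

/-- for four agents and eight chores, with agents 1 and 2 valuing every chore
at -10, and agents 3 and 4 valuing chore e₁ at -73 and every other chore at -1, no
allocation is simultaneously EF1, EQ1 and Pareto optimal. -/
theorem no_EF1_EQ1_PO_four_agents (v : Fin 4 → Fin 8 → ℝ)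
    (h1 : ∀ j, v 0 j = -10) (h2 : ∀ j, v 1 j = -10)
    (h3 : v 2 0 = -73) (h4 : v 3 0 = -73)
    (h5 : ∀ j : Fin 8, j ≠ 0 → v 2 j = -1)
    (h6 : ∀ j : Fin 8, j ≠ 0 → v 3 j = -1) :
    ∀ A : Fin 8 → Fin 4, ¬ (EF1 v A ∧ EQ1 v A ∧ ParetoOpt v A) := by
  intro A h
  obtain ⟨hEF, hEQ, hPO⟩ := h
  have hfin : ∀ i : Fin 4, i = 0 ∨ i = 1 ∨ i = 2 ∨ i = 3 := by decide
  have hcard : (bundle A 0).card + (bundle A 1).card + (bundle A 2).card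
      + (bundle A 3).card = 8 := by
    have := card_sum_bundles A
    rw [Fin.sum_univ_four] at this
    omega
  -- valuation packs for the "big" agents 2 and 3
  have hB0 : ∀ i : Fin 4, i = 2 ∨ i = 3 → v i 0 = -73 := by
    rintro i (rfl | rfl)
    · exact h3
    · exact h4
  have hB1 : ∀ i : Fin 4, i = 2 ∨ i = 3 → ∀ j : Fin 8, j ≠ 0 → v i j = -1 := by
    rintro i (rfl | rfl)
    · exact h5
    · exact h6
  have hBle : ∀ i : Fin 4, (i = 2 ∨ i = 3) → ∀ j, v i j ≤ -1 := by
    intro i hi j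
    by_cases hj : j = 0
    · subst hj; rw [hB0 i hi]; norm_num
    · rw [hB1 i hi j hj]
  have hBv : ∀ i : Fin 4, (i = 2 ∨ i = 3) → ∀ S : Finset (Fin 8), (0 : Fin 8) ∉ S →
      sval (v i) S = -(S.card : ℝ) := by
    intro i hi S h0
    exact sval_eq_neg_card (fun j hj => hB1 i hi j (fun e => h0 (e ▸ hj)))
  -- Case 1 : chore 0 is held by agent 2 or agent 3
  have bigcase : ∀ k : Fin 4, (k = 2 ∨ k = 3) → A 0 = k → False := by
    intro k hk hA0k
    by_cases hex : ∃ j : Fin 8, j ≠ 0 ∧ (A j = 0 ∨ A j = 1)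
    · -- swap chore 0 with a small chore held by agent 0 or 1 : Pareto improvement
      obtain ⟨j0, hj0, hpj⟩ := hex
      apply hPO
      refine ⟨fun j => if j = 0 then A j0 else if j = j0 then A 0 else A j, ?_⟩
      set B : Fin 8 → Fin 4 :=
        fun j => if j = 0 then A j0 else if j = j0 then A 0 else A j with hBdef
      have key : ∀ (i : Fin 4),
          sval (v i) (bundle B i) - sval (v i) (bundle A i) =
            ((if A j0 = i then v i 0 else 0) - (if A 0 = i then v i 0 else 0)) +
            ((if A 0 = i then v i j0 else 0) - (if A j0 = i then v i j0 else 0)) := by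
        intro i
        rw [sval_bundle, sval_bundle, ← Finset.sum_sub_distrib]
        have hsub : ∑ j : Fin 8,
            ((if B j = i then v i j else 0) - (if A j = i then v i j else 0))
            = ∑ j ∈ ({0, j0} : Finset (Fin 8)),
                ((if B j = i then v i j else 0) - (if A j = i then v i j else 0)) := by
          symm
          apply Finset.sum_subset (Finset.subset_univ _)
          intro x _ hx
          simp only [Finset.mem_insert, Finset.mem_singleton, not_or] at hx
          have hBx : B x = A x := by
            simp only [hBdef]
            rw [if_neg hx.1, if_neg hx.2]
          rw [hBx, sub_self]
        rw [hsub, Finset.sum_pair (Ne.symm hj0)]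
        have hb0 : B 0 = A j0 := by simp [hBdef]
        have hbj : B j0 = A 0 := by
          simp [hBdef, hj0]
        rw [hb0, hbj]
      have hv2j0 : v 2 j0 = -1 := h5 j0 hj0
      have hv3j0 : v 3 j0 = -1 := h6 j0 hj0
      constructor
      · intro i
        rw [ge_iff_le, ← sub_nonneg, key i]
        rcases hk with rfl | rfl <;> rcases hpj with hpj' | hpj' <;>
          rcases hfin i with rfl | rfl | rfl | rfl <;>
          simp [hA0k, hpj', h1, h2, h3, h4, hv2j0, hv3j0]
      · refine ⟨k, ?_⟩
        rw [gt_iff_lt, ← sub_pos, key k]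
        rcases hk with rfl | rfl <;> rcases hpj with hpj' | hpj' <;>
          simp [hA0k, hpj', h1, h2, h3, h4, hv2j0, hv3j0]
    · -- all chores are held by agents 2 and 3
      have hall : ∀ j, A j = 2 ∨ A j = 3 := by
        intro j
        by_cases hj0 : j = 0
        · subst hj0; rw [hA0k]; exact hk
        · rcases hfin (A j) with hj | hj | hj | hj
          · exact absurd ⟨j, hj0, Or.inl hj⟩ hex
          · exact absurd ⟨j, hj0, Or.inr hj⟩ hex
          · exact Or.inl hj
          · exact Or.inr hj
      have hb0 : bundle A 0 = ∅ := by
        ext j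
        simp only [mem_bundle, Finset.notMem_empty, iff_false]
        intro hj
        rcases hall j with hh | hh <;> rw [hj] at hh <;> exact absurd hh (by decide)
      have hb1 : bundle A 1 = ∅ := by
        ext j
        simp only [mem_bundle, Finset.notMem_empty, iff_false]
        intro hj
        rcases hall j with hh | hh <;> rw [hj] at hh <;> exact absurd hh (by decide)
      have hbig : 4 ≤ (bundle A 2).card ∨ 4 ≤ (bundle A 3).card := by
        rw [hb0, hb1] at hcard
        simp at hcard
        omega
      have final : ∀ r : Fin 4, (r = 2 ∨ r = 3) → 4 ≤ (bundle A r).card → False := by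
        intro r hr hr4
        have h0val : sval (v 0) (bundle A 0) = 0 := by rw [hb0]; simp [sval]
        rcases hEQ r 0 with hq | ⟨e, he, hq⟩
        · rw [h0val] at hq
          have hle := sval_le_neg_card (S := bundle A r) (hBle r hr)
          have hc : (4 : ℝ) ≤ ((bundle A r).card : ℝ) := by exact_mod_cast hr4
          linarith
        · rw [hb0, Finset.erase_empty] at hq
          have hz : sval (v 0) (∅ : Finset (Fin 8)) = 0 := by simp [sval]
          rw [hz] at hq
          have hle := sval_le_neg_card (S := (bundle A r).erase e) (hBle r hr)
          have hc : (bundle A r).card - 1 ≤ ((bundle A r).erase e).card :=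
            Finset.pred_card_le_card_erase
          have hc3 : 3 ≤ ((bundle A r).erase e).card := by omega
          have hc3' : (3 : ℝ) ≤ (((bundle A r).erase e).card : ℝ) := by exact_mod_cast hc3
          linarith
      rcases hbig with hh | hh
      · exact final 2 (Or.inl rfl) hh
      · exact final 3 (Or.inr rfl) hh
  -- Case 2 : chore 0 is held by agent 0 or agent 1
  have smallcase : ∀ p q : Fin 4, ((p = 0 ∧ q = 1) ∨ (p = 1 ∧ q = 0)) → A 0 = p → False := by
    intro p q hpq hA0p
    have hvp : ∀ j, v p j = -10 := by
      rcases hpq with ⟨rfl, rfl⟩ | ⟨rfl, rfl⟩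
      · exact h1
      · exact h2
    have hvq : ∀ j, v q j = -10 := by
      rcases hpq with ⟨rfl, rfl⟩ | ⟨rfl, rfl⟩
      · exact h2
      · exact h1
    have hp2 : p ≠ 2 := by rcases hpq with ⟨rfl, rfl⟩ | ⟨rfl, rfl⟩ <;> decide
    have hpq' : p ≠ q := by rcases hpq with ⟨rfl, rfl⟩ | ⟨rfl, rfl⟩ <;> decide
    have hq2ne : q ≠ 2 := by rcases hpq with ⟨rfl, rfl⟩ | ⟨rfl, rfl⟩ <;> decide
    have h0p : (0 : Fin 8) ∈ bundle A p := mem_bundle.2 hA0p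
    have h0notr : ∀ r : Fin 4, r ≠ p → (0 : Fin 8) ∉ bundle A r := by
      intro r hrp hmem
      exact hrp (by rw [← mem_bundle.1 hmem, hA0p])
    have h0n2 : (0 : Fin 8) ∉ bundle A 2 := h0notr 2 (Ne.symm hp2)
    have h0q : (0 : Fin 8) ∉ bundle A q := h0notr q (Ne.symm hpq')
    -- Step 1 : agent p holds only chore 0
    have hnp1 : (bundle A p).card = 1 := by
      have hpos : 1 ≤ (bundle A p).card := Finset.card_pos.2 ⟨0, h0p⟩
      rcases hEQ p 2 with hq2 | ⟨e, he, hq2⟩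
      · rw [sval_const hvp (bundle A p), hBv 2 (Or.inl rfl) _ h0n2] at hq2
        have hc8 : ((bundle A 2).card : ℝ) ≤ 8 := by exact_mod_cast card_le_eight _
        have hc1 : (1 : ℝ) ≤ ((bundle A p).card : ℝ) := by exact_mod_cast hpos
        linarith
      · have h0e : (0 : Fin 8) ∉ (bundle A 2).erase e :=
          fun hm => h0n2 (Finset.mem_of_mem_erase hm)
        rw [sval_const hvp ((bundle A p).erase e), hBv 2 (Or.inl rfl) _ h0e] at hq2
        have hc8 : (((bundle A 2).erase e).card : ℝ) ≤ 8 := by exact_mod_cast card_le_eight _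
        have hc1 : (bundle A p).card - 1 ≤ ((bundle A p).erase e).card :=
          Finset.pred_card_le_card_erase
        by_contra hne
        have h2' : 1 ≤ ((bundle A p).erase e).card := by omega
        have h2'' : (1 : ℝ) ≤ (((bundle A p).erase e).card : ℝ) := by exact_mod_cast h2'
        linarith
    have hbp : bundle A p = {0} := by
      obtain ⟨a, ha⟩ := Finset.card_eq_one.1 hnp1
      rw [ha] at h0p ⊢
      rw [Finset.mem_singleton] at h0p
      rw [h0p]
    have hsvqp : sval (v q) (bundle A p) = -10 := by
      rw [hbp]; simp [sval, hvq]
    -- Step 2 : agent q holds at most 2 chores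
    have hb2 : (bundle A q).card ≤ 2 := by
      rcases hEF q p with hf | ⟨e, he, hf⟩
      · rw [sval_const hvq (bundle A q), hsvqp] at hf
        by_contra hne
        have : (3 : ℝ) ≤ ((bundle A q).card : ℝ) := by exact_mod_cast by omega
        linarith
      · rw [hbp] at he hf
        rcases Finset.mem_union.1 he with heq | heq
        · have he0 : e ≠ 0 := fun h' => h0q (h' ▸ heq)
          rw [show ({0} : Finset (Fin 8)).erase e = {0} from
              Finset.erase_eq_of_notMem (by simp [he0]),
            sval_const hvq ((bundle A q).erase e)] at hf
          have hsv : sval (v q) ({0} : Finset (Fin 8)) = -10 := by simp [sval, hvq]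
          rw [hsv] at hf
          have hce := Finset.card_erase_of_mem heq
          by_contra hne
          have : (2 : ℝ) ≤ (((bundle A q).erase e).card : ℝ) := by exact_mod_cast by omega
          linarith
        · rw [Finset.mem_singleton] at heq
          subst heq
          rw [Finset.erase_singleton, Finset.erase_eq_of_notMem h0q,
            sval_const hvq (bundle A q)] at hf
          have hz : sval (v q) (∅ : Finset (Fin 8)) = 0 := by simp [sval]
          rw [hz] at hf
          by_contra hne
          have : (3 : ℝ) ≤ ((bundle A q).card : ℝ) := by exact_mod_cast by omega
          linarith
    have hpsum : (bundle A p).card + (bundle A q).card + (bundle A 2).card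
        + (bundle A 3).card = 8 := by
      rcases hpq with ⟨rfl, rfl⟩ | ⟨rfl, rfl⟩ <;> omega
    by_cases hb0 : (bundle A q).card = 0
    · -- Step 3 : if q holds nothing, agents 2 and 3 hold at most 1 chore each : too few
      have hbq : bundle A q = ∅ := Finset.card_eq_zero.1 hb0
      have hsmall : ∀ r : Fin 4, (r = 2 ∨ r = 3) → (bundle A r).card ≤ 1 := by
        intro r hr
        have hrp : r ≠ p := by
          rcases hpq with ⟨rfl, rfl⟩ | ⟨rfl, rfl⟩ <;> rcases hr with rfl | rfl <;> decide
        have h0r : (0 : Fin 8) ∉ bundle A r := h0notr r hrp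
        have hz : sval (v q) (∅ : Finset (Fin 8)) = 0 := by simp [sval]
        rcases hEQ r q with hq2 | ⟨e, he, hq2⟩
        · rw [hBv r hr _ h0r, hbq, hz] at hq2
          have : ((bundle A r).card : ℝ) ≤ 0 := by linarith
          have : (bundle A r).card ≤ 0 := by exact_mod_cast this
          omega
        · rw [hbq, Finset.erase_empty, hz] at hq2
          have h0e : (0 : Fin 8) ∉ (bundle A r).erase e :=
            fun hm => h0r (Finset.mem_of_mem_erase hm)
          rw [hBv r hr _ h0e] at hq2
          have : (((bundle A r).erase e).card : ℝ) ≤ 0 := by linarith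
          have hec : ((bundle A r).erase e).card ≤ 0 := by exact_mod_cast this
          have := Finset.pred_card_le_card_erase (a := e) (s := bundle A r)
          omega
      have hs2 := hsmall 2 (Or.inl rfl)
      have hs3 := hsmall 3 (Or.inr rfl)
      omega
    · -- Step 4 : q holds 1 or 2 chores ; EF1 of agents 2,3 towards q bounds their bundles
      have hb1' : 1 ≤ (bundle A q).card := by omega
      have hble : ∀ r : Fin 4, (r = 2 ∨ r = 3) →
          (bundle A r).card ≤ (bundle A q).card + 1 := by
        intro r hr
        have hrp : r ≠ p := by
          rcases hpq with ⟨rfl, rfl⟩ | ⟨rfl, rfl⟩ <;> rcases hr with rfl | rfl <;> decide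
        have hrq : r ≠ q := by
          rcases hpq with ⟨rfl, rfl⟩ | ⟨rfl, rfl⟩ <;> rcases hr with rfl | rfl <;> decide
        have h0r : (0 : Fin 8) ∉ bundle A r := h0notr r hrp
        rcases hEF r q with hf | ⟨e, he, hf⟩
        · rw [hBv r hr _ h0r, hBv r hr _ h0q] at hf
          have : ((bundle A r).card : ℝ) ≤ ((bundle A q).card : ℝ) := by linarith
          have : (bundle A r).card ≤ (bundle A q).card := by exact_mod_cast this
          omega
        · rcases Finset.mem_union.1 he with heq | heq
          · have hAe : A e = r := mem_bundle.1 heq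
            rw [bundle_erase_of_ne (i := q) (by rw [hAe]; exact hrq)] at hf
            have h0e : (0 : Fin 8) ∉ (bundle A r).erase e :=
              fun hm => h0r (Finset.mem_of_mem_erase hm)
            rw [hBv r hr _ h0e, hBv r hr _ h0q] at hf
            have : (((bundle A r).erase e).card : ℝ) ≤ ((bundle A q).card : ℝ) := by
              linarith
            have hec : ((bundle A r).erase e).card ≤ (bundle A q).card := by
              exact_mod_cast this
            have := Finset.pred_card_le_card_erase (a := e) (s := bundle A r)
            omega
          · have hAe : A e = q := mem_bundle.1 heq
            rw [bundle_erase_of_ne (i := r) (by rw [hAe]; exact Ne.symm hrq)] at hf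
            have h0e : (0 : Fin 8) ∉ (bundle A q).erase e :=
              fun hm => h0q (Finset.mem_of_mem_erase hm)
            rw [hBv r hr _ h0r, hBv r hr _ h0e] at hf
            have : ((bundle A r).card : ℝ) ≤ (((bundle A q).erase e).card : ℝ) := by
              linarith
            have hec : (bundle A r).card ≤ ((bundle A q).erase e).card := by
              exact_mod_cast this
            have := Finset.card_erase_of_mem heq
            omega
      have h2b := hble 2 (Or.inl rfl)
      have h3b := hble 3 (Or.inr rfl)
      have hq2card : (bundle A q).card = 2 := by omega
      have hn2le : (bundle A 2).card ≤ 3 := by omega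
      -- Final contradiction : EQ1 of agent q towards agent 2 fails
      have hn2le' : ((bundle A 2).card : ℝ) ≤ 3 := by exact_mod_cast hn2le
      rcases hEQ q 2 with hq2 | ⟨e, he, hq2⟩
      · rw [sval_const hvq (bundle A q), hBv 2 (Or.inl rfl) _ h0n2, hq2card] at hq2
        norm_num at hq2
        linarith
      · rcases Finset.mem_union.1 he with heq | heq
        · have hAe : A e = q := mem_bundle.1 heq
          rw [bundle_erase_of_ne (i := (2 : Fin 4)) (by rw [hAe]; exact hq2ne)] at hq2
          rw [sval_const hvq ((bundle A q).erase e), hBv 2 (Or.inl rfl) _ h0n2] at hq2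
          have hce := Finset.card_erase_of_mem heq
          have hce1 : ((bundle A q).erase e).card = 1 := by omega
          rw [hce1] at hq2
          norm_num at hq2
          linarith
        · have hAe : A e = 2 := mem_bundle.1 heq
          rw [bundle_erase_of_ne (i := q) (by rw [hAe]; exact Ne.symm hq2ne)] at hq2
          have h0e : (0 : Fin 8) ∉ (bundle A 2).erase e :=
            fun hm => h0n2 (Finset.mem_of_mem_erase hm)
          rw [sval_const hvq (bundle A q), hBv 2 (Or.inl rfl) _ h0e, hq2card] at hq2
          have hce := Finset.card_erase_of_mem heq
          norm_num at hq2
          omega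
  rcases hfin (A 0) with hh | hh | hh | hh
  · exact smallcase 0 1 (Or.inl ⟨rfl, rfl⟩) hh
  · exact smallcase 1 0 (Or.inr ⟨rfl, rfl⟩) hh
  · exact bigcase 2 (Or.inl rfl) hh
  · exact bigcase 3 (Or.inr rfl) hh
end
end

section
/- Consider two agents and two indivisible items e_1, e_2 with additive valuations v_1(e_1) = v_1(e_2) = 1 and v_2(e_1) = v_2(e_2) = -1. Then the unique Pareto optimal allocation assigns both items to agent 1, and this allocation is neither equitable nor equitable up to one item; hence for mixed items, Pareto optimality is incompatible with EQ and with EQ1 even for two agents. -/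
open Finset

attribute [local instance] Classical.propDecidable

noncomputable section

/-- Equitability. -/
def EQ {m n : ℕ} (v : Fin n → Fin m → ℝ) (A : Fin m → Fin n) : Prop :=
  ∀ i j : Fin n, sval (v i) (bundle A i) = sval (v j) (bundle A j)

/-- for two agents and two items, with agent 1 valuing each item at 1 and
agent 2 valuing each item at -1, the unique Pareto optimal allocation assigns both items to
agent 1, and this allocation is neither EQ nor EQ1; hence for mixed items PO is incompatible
with EQ and with EQ1 even for two agents. -/
theorem mixed_PO_incompatible_EQ_EQ1 (v : Fin 2 → Fin 2 → ℝ)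
    (h1 : ∀ j, v 0 j = 1) (h2 : ∀ j, v 1 j = -1) :
    (∀ A : Fin 2 → Fin 2, ParetoOpt v A ↔ ∀ j, A j = 0) ∧
    (∀ A : Fin 2 → Fin 2, (∀ j, A j = 0) → ¬ EQ v A ∧ ¬ EQ1 v A) := by

  have hs0 : ∀ S : Finset (Fin 2), sval (v 0) S = S.card := by
    intro S; simp [sval, h1]
  have hs1 : ∀ S : Finset (Fin 2), sval (v 1) S = -S.card := by
    intro S; simp [sval, h2]
  have hb0 : bundle (fun _ : Fin 2 => (0 : Fin 2)) 0 = Finset.univ := by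
    simp [bundle]
  have hb1 : bundle (fun _ : Fin 2 => (0 : Fin 2)) 1 = ∅ := by
    simp only [bundle]
    refine Finset.filter_false_of_mem ?_
    intro x _; exact Fin.zero_ne_one
  have hcard : ∀ B : Fin 2 → Fin 2, (bundle B 0).card + (bundle B 1).card = 2 := by
    intro B
    have : bundle B 1 = Finset.univ \ bundle B 0 := by
      ext x
      simp only [bundle, Finset.mem_filter, Finset.mem_sdiff, Finset.mem_univ, true_and]
      constructor
      · intro h; rw [h]; decide
      · intro h; exact Fin.eq_one_of_ne_zero _ h
    rw [this, Finset.card_sdiff_of_subset (Finset.subset_univ _)]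
    have hle : (bundle B 0).card ≤ 2 := by
      simpa using Finset.card_le_card (Finset.subset_univ (bundle B 0))
    simp only [Finset.card_univ, Fintype.card_fin]
    omega
  constructor
  · intro A
    constructor
    · intro hPO
      by_contra h
      push_neg at h
      obtain ⟨j, hj⟩ := h
      have hj1 : A j = 1 := Fin.eq_one_of_ne_zero _ hj
      refine hPO ⟨fun _ => 0, ?_, 1, ?_⟩
      · intro i
        fin_cases i <;> simp only [Fin.zero_eta, Fin.mk_one]
        · rw [hs0, hs0, hb0]
          have : (bundle A 0).card ≤ 2 := by
            simpa using Finset.card_le_card (Finset.subset_univ (bundle A 0))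
          simp only [Finset.card_univ, Fintype.card_fin]
          exact_mod_cast this
        · rw [hs1, hs1, hb1]
          have hjmem : j ∈ bundle A 1 := by simp [bundle, hj1]
          have : 1 ≤ (bundle A 1).card := Finset.card_pos.mpr ⟨j, hjmem⟩
          simp only [Finset.card_empty, Nat.cast_zero, neg_zero, ge_iff_le,
            neg_nonpos]
          exact_mod_cast Nat.zero_le _
      · rw [hs1, hs1, hb1]
        have hjmem : j ∈ bundle A 1 := by simp [bundle, hj1]
        have h1le : 1 ≤ (bundle A 1).card := Finset.card_pos.mpr ⟨j, hjmem⟩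
        have : (0 : ℝ) < (bundle A 1).card := by exact_mod_cast h1le
        simpa using this
    · intro hA
      have hAe : A = fun _ => 0 := funext hA
      subst hAe
      rintro ⟨B, hge, i, hgt⟩
      have h0 : sval (v 0) (bundle B 0) ≥ 2 := by
        have := hge 0
        rwa [hs0 (bundle (fun _ => 0) 0), hb0, Finset.card_univ, Fintype.card_fin,
          Nat.cast_ofNat] at this
      have hc0 : (bundle B 0).card = 2 := by
        have hle : (bundle B 0).card ≤ 2 := by
          simpa using Finset.card_le_card (Finset.subset_univ (bundle B 0))
        have : (2 : ℝ) ≤ (bundle B 0).card := by rwa [hs0] at h0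
        have : (2 : ℕ) ≤ (bundle B 0).card := by exact_mod_cast this
        omega
      have hc1 : (bundle B 1).card = 0 := by have := hcard B; omega
      fin_cases i <;> simp only [Fin.zero_eta, Fin.mk_one] at hgt
      · rw [hs0, hs0, hb0, hc0] at hgt
        simp at hgt
      · rw [hs1, hs1, hb1, hc1] at hgt
        simp at hgt
  · intro A hA
    have hAe : A = fun _ => 0 := funext hA
    subst hAe
    constructor
    · intro hEQ
      have := hEQ 0 1
      rw [hs0, hs1, hb0, hb1] at this
      simp at this
    · intro hEQ1
      rcases hEQ1 1 0 with h | ⟨e, _, h⟩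
      · rw [hs1, hs0, hb0, hb1] at h
        simp at h
        norm_num at h
      · rw [hs1, hs0, hb0, hb1] at h
        have : (Finset.univ.erase e : Finset (Fin 2)).card = 1 := by
          rw [Finset.card_erase_of_mem (Finset.mem_univ e)]
          simp
        rw [Finset.erase_empty] at h
        rw [this] at h
        simp at h
        norm_num at h
end
end
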